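/- Let c > 1 and define a_k as a_0 = 1, a_k = (-1)^k c^k / ∏_{l=1}^{k}(c^l - 1) for k ≥ 1, with a_k = 0 for k < 0. Then for all integers i ≥ j ≥ 0, the identity c^{-i+1} a_{i-1-j} - c^{-i} a_{i-j} = -c^{-j} a_{i-j} holds. -/

import Mathlib

open Finset

theorem aldous_shields_eigenvector (c : ℝ) (hc : 1 < c) (a : ℤ → ℝ)
    (ha0 : a 0 = 1)
    (haneg : ∀ k : ℤ, k < 0 → a k = 0)
    (ha : ∀ k : ℕ, 1 ≤ k →
      a (k : ℤ) = (-1 : ℝ) ^ k * c ^ k / ∏ l ∈ Finset.Icc 1 k, (c ^ l - 1))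
    (i j : ℤ) (hj : 0 ≤ j) (hij : j ≤ i) :
    c ^ (-i + 1) * a (i - 1 - j) - c ^ (-i) * a (i - j) = -c ^ (-j) * a (i - j) := by
  have hc0 : (0 : ℝ) < c := lt_trans one_pos hc
  have hcne : c ≠ 0 := ne_of_gt hc0
  -- formula valid also for k = 0
  have ha' : ∀ k : ℕ, a (k : ℤ) = (-1 : ℝ) ^ k * c ^ k / ∏ l ∈ Finset.Icc 1 k, (c ^ l - 1) := by
    intro k
    rcases Nat.eq_zero_or_pos k with hk | hk
    · subst hk; simp [ha0]
    · exact ha k hk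
  have hpos : ∀ k : ℕ, (0 : ℝ) < ∏ l ∈ Finset.Icc 1 k, (c ^ l - 1) := by
    intro k
    apply Finset.prod_pos
    intro l hl
    have hl1 : 1 ≤ l := (Finset.mem_Icc.mp hl).1
    have : (1 : ℝ) < c ^ l := one_lt_pow₀ hc (by omega)
    linarith
  -- key recurrence : c * a (k-1) = (1 - c^k) * a k for k ≥ 1
  have hrec : ∀ k : ℕ, 1 ≤ k → c * a ((k : ℤ) - 1) = (1 - c ^ k) * a (k : ℤ) := by
    intro k hk
    obtain ⟨m, rfl⟩ := Nat.exists_eq_add_of_le hk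
    have h1 : ((1 + m : ℕ) : ℤ) - 1 = (m : ℤ) := by push_cast; ring
    rw [h1, ha' m, ha' (1 + m)]
    have hsucc : (1 + m) = m + 1 := by omega
    rw [hsucc, Finset.prod_Icc_succ_top (by omega : 1 ≤ m + 1)]
    have hPne : (∏ l ∈ Finset.Icc 1 m, (c ^ l - 1)) ≠ 0 := ne_of_gt (hpos m)
    have hcm : (1 : ℝ) < c ^ (m + 1) := one_lt_pow₀ hc (by omega)
    have hcmne : c ^ (m + 1) - 1 ≠ 0 := by linarith
    field_simp
    ring
  rcases eq_or_lt_of_le hij with rfl | hlt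
  · -- i = j
    have h1 : j - 1 - j = -1 := by ring
    have h2 : j - j = 0 := by ring
    rw [h1, h2, haneg (-1) (by norm_num)]
    ring
  · -- i > j : set k = i - j ≥ 1
    obtain ⟨k, hk⟩ : ∃ k : ℕ, i - j = (k : ℤ) := ⟨(i - j).toNat, by omega⟩
    have hk1 : 1 ≤ k := by omega
    have e1 : i - 1 - j = (k : ℤ) - 1 := by omega
    have e2 : (-i + 1 : ℤ) = -i + 1 := rfl
    rw [e1, hk]
    have hz1 : c ^ (-i + 1) = c ^ (-i) * c := by
      rw [zpow_add₀ hcne, zpow_one]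
    have hz2 : c ^ (-j) = c ^ (-i) * c ^ k := by
      rw [← zpow_natCast c k, ← zpow_add₀ hcne]
      congr 1
      omega
    rw [hz1, hz2]
    have := hrec k hk1
    have hane : c ^ (-i) ≠ 0 := zpow_ne_zero _ hcne
    calc c ^ (-i) * c * a ((k:ℤ) - 1) - c ^ (-i) * a (k:ℤ)
        = c ^ (-i) * (c * a ((k:ℤ) - 1)) - c ^ (-i) * a (k:ℤ) := by ring
      _ = c ^ (-i) * ((1 - c ^ k) * a (k:ℤ)) - c ^ (-i) * a (k:ℤ) := by rw [this]
      _ = -(c ^ (-i) * c ^ k) * a (k:ℤ) := by ring
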